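/- Let $g_0, \dots, g_p$ be elements of a commutative $\mathbb{Z}_p$-algebra $R$ which is an integral domain, let $\upsilon_n := \sum_{j=0}^p g_j^n$ be the power sums, and let $\xi_1, \dots, \xi_{p+1}$ be the elementary symmetric polynomials in $g_0, \dots, g_p$. Suppose $\upsilon_n \in pR$ for $n = 1, \dots, p$, and $\upsilon_{p+1} \in R$. Then for every $n \ge 1$ with $\delta_p(n(p-1)) = p-1$, we have $\upsilon_n \in pR$. -/

import Mathlib

set_option linter.unusedSectionVars false
set_option maxHeartbeats 1000000


open Nat

section Arith

variable {p : ℕ} [hp : Fact p.Prime]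

private lemma two_le_p : 2 ≤ p := hp.out.two_le

/-- The digit-crawl lemma: if every base-`p` digit of `J` is at most the next-higher
digit of `N`, the number `N + J + 1` has nonincreasing base-`p` digits, and its last
digit is at most `b ≤ N % p`, we get a contradiction. -/
private lemma crawl : ∀ N : ℕ, ∀ J b : ℕ,
    (∀ k, J / p ^ k % p ≤ N / p ^ (k + 1) % p) →
    (∀ k, (N + J + 1) / p ^ (k + 1) % p ≤ (N + J + 1) / p ^ k % p) →
    (N + J + 1) % p ≤ b → b ≤ N % p → False := by
  intro N
  induction N using Nat.strong_induction_on with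
  | _ N ih =>
    intro J b h1 h2 hub hbN
    have hp2 : 2 ≤ p := two_le_p
    have hNp : N % p < p := Nat.mod_lt _ (by omega)
    have hJp : J % p < p := Nat.mod_lt _ (by omega)
    by_cases hc : N % p + J % p + 1 < p
    · -- no carry at the bottom: digit of u is too big
      have hu : (N + J + 1) % p = N % p + J % p + 1 := by
        conv_lhs => rw [show N + J + 1 = (N % p + J % p + 1) + p * (N / p + J / p) by
          have := Nat.mod_add_div N p; have := Nat.mod_add_div J p; ring_nf; omega]
        rw [Nat.add_mul_mod_self_left]
        exact Nat.mod_eq_of_lt hc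
      omega
    · -- carry at the bottom
      push_neg at hc
      have hJ0 : J % p ≤ N / p % p := by
        have := h1 0; simpa using this
      have hN0 : N ≠ 0 := by
        intro h; subst h
        have h1' : J % p ≤ 0 := by simpa using hJ0
        simp only [Nat.zero_mod] at hc
        omega
      have hv : (N + J + 1) % p = N % p + J % p + 1 - p := by
        conv_lhs => rw [show N + J + 1 = (N % p + J % p + 1 - p) + p * (N / p + J / p + 1) by
          have := Nat.mod_add_div N p; have := Nat.mod_add_div J p; ring_nf; omega]
        rw [Nat.add_mul_mod_self_left]
        exact Nat.mod_eq_of_lt (by omega)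
      have hdiv : (N + J + 1) / p = N / p + J / p + 1 := by
        conv_lhs => rw [show N + J + 1 = (N % p + J % p + 1 - p) + p * (N / p + J / p + 1) by
          have := Nat.mod_add_div N p; have := Nat.mod_add_div J p; ring_nf; omega]
        rw [Nat.add_mul_div_left _ _ (by omega : 0 < p), Nat.div_eq_of_lt (by omega), zero_add]
      refine ih (N / p) (Nat.div_lt_self (by omega) (by omega)) (J / p)
        ((N / p + J / p + 1) % p) ?_ ?_ le_rfl ?_
      · intro k
        have := h1 (k + 1)
        simpa [Nat.div_div_eq_div_mul, pow_succ, mul_comm] using this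
      · intro k
        have e := h2 (k + 1)
        have shift : ∀ M k0 : ℕ, M / p ^ (k0 + 1) = (M / p) / p ^ k0 := by
          intro M k0; rw [Nat.div_div_eq_div_mul, ← _root_.pow_succ']
        rw [shift (N + J + 1) (k + 1), shift (N + J + 1) k, hdiv] at e
        exact e
      · -- (N/p + J/p + 1) % p ≤ N/p % p
        have e1 : (N + J + 1) / p % p ≤ (N + J + 1) % p := by simpa using h2 0
        rw [hdiv] at e1
        have : (N / p + J / p + 1) % p ≤ J % p := by omega
        omega

end Arith

section Arith2

variable {p : ℕ} [hp : Fact p.Prime]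

private lemma shift_div (M k : ℕ) : M / p ^ (k + 1) = (M / p) / p ^ k := by
  rw [Nat.div_div_eq_div_mul, ← _root_.pow_succ']

/-- One direction of Lucas' theorem, digit-wise. -/
private lemma lucas_dig : ∀ (k N J : ℕ), ¬ p ∣ N.choose J →
    J / p ^ k % p ≤ N / p ^ k % p := by
  intro k
  induction k with
  | zero =>
    intro N J h
    simp only [pow_zero, Nat.div_one]
    by_contra hlt
    push_neg at hlt
    have h0 : (N % p).choose (J % p) = 0 := Nat.choose_eq_zero_of_lt hlt
    have := (Choose.choose_modEq_choose_mod_mul_choose_div_nat (p := p) (n := N) (k := J)).trans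
      (by rw [h0, zero_mul])
    exact h ((Nat.modEq_zero_iff_dvd).mp this)
  | succ k ih =>
    intro N J h
    rw [shift_div, shift_div]
    apply ih
    intro hdvd
    have h0 : p ∣ (N % p).choose (J % p) * ((N / p).choose (J / p)) := hdvd.mul_left _
    have := (Choose.choose_modEq_choose_mod_mul_choose_div_nat (p := p) (n := N) (k := J)).trans
      ((Nat.modEq_zero_iff_dvd).mpr h0)
    exact h ((Nat.modEq_zero_iff_dvd).mp this)

/-- If the base-`p` digit sum of `m` is at most `p-1`, then the number
`M = (m - digitsum m)/(p-1)` has nonincreasing base-`p` digits. -/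
private lemma exists_NI : ∀ m : ℕ, (Nat.digits p m).sum ≤ p - 1 →
    ∃ M, (p - 1) * M + (Nat.digits p m).sum = m ∧
      (∀ k, M / p ^ (k + 1) % p ≤ M / p ^ k % p) ∧
      M % p = (Nat.digits p (m / p)).sum := by
  intro m
  induction m using Nat.strong_induction_on with
  | _ m ih =>
    intro hsum
    have hp2 : 2 ≤ p := two_le_p
    rcases Nat.eq_zero_or_pos m with hm | hm
    · subst hm
      exact ⟨0, by simp, by simp, by simp⟩
    · have hdig : (Nat.digits p m).sum = m % p + (Nat.digits p (m / p)).sum := by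
        rw [Nat.digits_def' (by omega : 1 < p) hm, List.sum_cons]
      set δ' := (Nat.digits p (m / p)).sum with hδ'
      have hδ'le : δ' ≤ p - 1 := by omega
      obtain ⟨M', hM'1, hM'2, hM'3⟩ := ih (m / p) (Nat.div_lt_self hm (by omega)) hδ'le
      refine ⟨δ' + p * M', ?_, ?_, ?_⟩
      · obtain ⟨q, hq⟩ : ∃ q, p = q + 1 := ⟨p - 1, by omega⟩
        have hq1 : p - 1 = q := by omega
        have hM'1' : q * M' + δ' = m / p := by rw [← hq1, hδ']; exact hM'1
        rw [hdig, hq1]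
        have e : q * (δ' + p * M') + (m % p + δ') = m % p + p * (q * M' + δ') := by
          rw [hq]; ring
        rw [e, hM'1']
        exact Nat.mod_add_div m p
      · have hMp : (δ' + p * M') / p = M' := by
          rw [Nat.add_mul_div_left _ _ (by omega : 0 < p), Nat.div_eq_of_lt (by omega), zero_add]
        have hMm : (δ' + p * M') % p = δ' := by
          rw [Nat.add_mul_mod_self_left, Nat.mod_eq_of_lt (by omega)]
        intro k
        rcases k with _ | k
        · -- digit 1 ≤ digit 0
          rw [shift_div, hMp]
          simp only [pow_zero, Nat.div_one, hMm]
          rw [hM'3]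
          rcases Nat.eq_zero_or_pos (m / p) with h0 | h0
          · rw [h0]; simp [hδ', h0]
          · have : δ' = (m / p) % p + (Nat.digits p (m / p / p)).sum := by
              rw [hδ', Nat.digits_def' (by omega : 1 < p) h0, List.sum_cons]
            omega
        · have l1 : (δ' + p * M') / p ^ (k + 1 + 1) = M' / p ^ (k + 1) := by
            rw [shift_div, hMp]
          have l2 : (δ' + p * M') / p ^ (k + 1) = M' / p ^ k := by
            rw [shift_div, hMp]
          rw [l1, l2]
          exact hM'2 k
      · rw [Nat.add_mul_mod_self_left, Nat.mod_eq_of_lt (by omega)]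

private lemma NI_of_digitsum (n : ℕ) (hn : 1 ≤ n)
    (hδ : (Nat.digits p (n * (p - 1))).sum = p - 1) :
    ∀ k, (n - 1) / p ^ (k + 1) % p ≤ (n - 1) / p ^ k % p := by
  obtain ⟨M, h1, h2, _⟩ := exists_NI (n * (p - 1)) (le_of_eq hδ)
  have hp2 : 2 ≤ p := two_le_p
  have hMn : M = n - 1 := by
    rw [hδ] at h1
    have h3 : (p - 1) * (M + 1) = (p - 1) * n := by
      rw [Nat.mul_add, mul_one, h1, mul_comm]
    have := Nat.eq_of_mul_eq_mul_left (by omega : 0 < p - 1) h3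
    omega
  rwa [hMn] at h2

/-- The key arithmetic lemma: if `n = i·p + j·(p+1)` with `j ≥ 1` and the base-`p`
digit sum of `n(p-1)` is `p-1`, then `p ∣ C(i+j-1, i)`. -/
private lemma arith_key (n i j : ℕ) (hn : 1 ≤ n) (hj : 1 ≤ j)
    (heq : i * p + j * (p + 1) = n)
    (hδ : (Nat.digits p (n * (p - 1))).sum = p - 1) :
    p ∣ Nat.choose (i + j - 1) i := by
  have hp2 : 2 ≤ p := two_le_p
  set J := j - 1 with hJ
  set N := i + j - 1 with hN
  have hNJ : N = i + J := by omega
  have hn' : (N + 1) * p + J + 1 = n := by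
    have hj' : j = J + 1 := by omega
    rw [hNJ]
    calc (i + J + 1) * p + J + 1 = i * p + (J + 1) * (p + 1) := by ring
    _ = n := by rw [← hj']; exact heq
  by_contra hnd
  have dle : ∀ k, J / p ^ k % p ≤ N / p ^ k % p := fun k => lucas_dig k N J (by
    intro hd
    apply hnd
    have hiN : i ≤ N := by omega
    have : N - i = J := by omega
    rwa [← this, Nat.choose_symm hiN] at hd)
  have hNI := NI_of_digitsum n hn hδ
  have hM : n - 1 = J + (N + 1) * p := by omega
  have hMmod : (n - 1) % p = J % p := by rw [hM, Nat.add_mul_mod_self_right]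
  have hMdiv : (n - 1) / p = N + J / p + 1 := by
    rw [hM, Nat.add_mul_div_right _ _ (by omega : 0 < p)]; omega
  refine crawl (p := p) N (J / p) ((n - 1) % p) ?_ ?_ ?_ ?_
  · intro k
    rw [← shift_div]
    exact dle (k + 1)
  · intro k
    have l1 : (n - 1) / p ^ (k + 1 + 1) = (N + J / p + 1) / p ^ (k + 1) := by
      rw [shift_div, hMdiv]
    have l2 : (n - 1) / p ^ (k + 1) = (N + J / p + 1) / p ^ k := by
      rw [shift_div, hMdiv]
    have e := hNI (k + 1)
    rw [l1, l2] at e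
    exact e
  · have e := hNI 0
    simp only [zero_add, pow_one, pow_zero, Nat.div_one] at e
    rwa [hMdiv] at e
  · have e := dle 0
    simp only [pow_zero, Nat.div_one] at e
    rwa [hMmod]

end Arith2

open Finset MvPolynomial

section Alg

variable {p : ℕ} [hp : Fact p.Prime] {S : Type*} [CommRing S]

private lemma psum_eval (h : Fin (p + 1) → S) (m : ℕ) :
    MvPolynomial.eval h (psum (Fin (p + 1)) S m) = ∑ j, h j ^ m := by
  simp [MvPolynomial.psum, map_sum]

private lemma esymm_eval_zero (h : Fin (p + 1) → S) :
    MvPolynomial.eval h (esymm (Fin (p + 1)) S 0) = 1 := by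
  simp [MvPolynomial.esymm_zero]

private lemma esymm_eval_big (h : Fin (p + 1) → S) (k : ℕ) (hk : p + 2 ≤ k) :
    MvPolynomial.eval h (esymm (Fin (p + 1)) S k) = 0 := by
  have : esymm (Fin (p + 1)) S k = 0 := by
    rw [MvPolynomial.esymm]
    rw [Finset.powersetCard_eq_empty.mpr (by simp [Finset.card_univ]; omega)]
    simp
  rw [this, map_zero]

private lemma filter_antidiagonal_sum (k : ℕ) (F : ℕ → ℕ → S) :
    ∑ a ∈ Finset.filter (fun a => a.1 < k) (Finset.HasAntidiagonal.antidiagonal k), F a.1 a.2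
      = ∑ i ∈ Finset.range k, F i (k - i) := by
  rw [Finset.sum_filter, Finset.Nat.sum_antidiagonal_eq_sum_range_succ_mk, Finset.sum_range_succ]
  simp only [lt_irrefl, if_false, add_zero]
  exact Finset.sum_congr rfl fun i hi => if_pos (Finset.mem_range.mp hi)

private lemma newton_eval (h : Fin (p + 1) → S) (k : ℕ) :
    (k : S) * MvPolynomial.eval h (esymm (Fin (p + 1)) S k) =
      (-1) ^ (k + 1) * ∑ i ∈ Finset.range k,
        (-1) ^ i * MvPolynomial.eval h (esymm (Fin (p + 1)) S i) *
          MvPolynomial.eval h (psum (Fin (p + 1)) S (k - i)) := by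
  have hnid := congrArg (MvPolynomial.eval h) (MvPolynomial.mul_esymm_eq_sum (Fin (p + 1)) S k)
  rw [← filter_antidiagonal_sum k
    (fun a b => (-1) ^ a * MvPolynomial.eval h (esymm (Fin (p + 1)) S a) *
      MvPolynomial.eval h (psum (Fin (p + 1)) S b))]
  simpa [map_sum, map_mul, map_pow] using hnid

end Alg


open Finset MvPolynomial

section Alg2

variable {S : Type*} [CommRing S]

/-- The coefficient term `C(i+j-1, i) A^i B^j` where `i = (n - j(p+1))/p`, when
`n = i·p + j·(p+1)` with `j ≥ 1`, and `0` otherwise. -/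
private def Tterm (p : ℕ) (A B : S) (n j : ℕ) : S :=
  if j * (p + 1) ≤ n ∧ p ∣ (n - j * (p + 1)) ∧ 1 ≤ j then
    (Nat.choose ((n - j * (p + 1)) / p + (j - 1)) ((n - j * (p + 1)) / p) : S) *
      A ^ ((n - j * (p + 1)) / p) * B ^ j
  else 0

private def fsum (p : ℕ) (A B : S) (n : ℕ) : S := ∑ j ∈ Finset.range (n + 1), Tterm p A B n j

private lemma Tterm_zero_of_lt {p : ℕ} {A B : S} {n j : ℕ} (h : n < j * (p + 1)) :
    Tterm p A B n j = 0 := by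
  rw [Tterm, if_neg]; intro hg; exact absurd hg.1 (by omega)

private lemma Tterm_zero_j0 {p : ℕ} {A B : S} {n : ℕ} : Tterm p A B n 0 = 0 := by
  rw [Tterm, if_neg]; intro hg; exact absurd hg.2.2 (by omega)

private lemma fsum_ext {p : ℕ} {A B : S} {n : ℕ} (K : ℕ) (hK : n + 1 ≤ K) :
    fsum p A B n = ∑ j ∈ Finset.range K, Tterm p A B n j := by
  rw [fsum]
  apply Finset.sum_subset (Finset.range_subset_range.mpr hK)
  intro j _ hj
  have hj' : n + 1 ≤ j := by
    by_contra hc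
    exact hj (Finset.mem_range.mpr (by omega))
  exact Tterm_zero_of_lt (by
    have : j ≤ j * (p + 1) := Nat.le_mul_of_pos_right j (by omega)
    omega)

private lemma Tterm_step {p : ℕ} (hp2 : 2 ≤ p) (A B : S) (n j : ℕ) (hn : p + 2 ≤ n) :
    Tterm p A B n j = A * Tterm p A B (n - p) j + B * Tterm p A B (n - p - 1) (j - 1) := by
  rcases Nat.eq_zero_or_pos j with hj | hj
  · subst hj
    simp [Tterm_zero_j0]
  by_cases hg1 : j * (p + 1) ≤ n ∧ p ∣ (n - j * (p + 1))
  · obtain ⟨hle, i, hi⟩ := hg1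
    have hcomm : i * p = p * i := Nat.mul_comm i p
    have hin : i * p + j * (p + 1) = n := by omega
    have hidiv : (n - j * (p + 1)) / p = i := by
      rw [hi]; exact Nat.mul_div_cancel_left i (by omega)
    have hTmain : Tterm p A B n j =
        (Nat.choose (i + (j - 1)) i : S) * A ^ i * B ^ j := by
      rw [Tterm, if_pos ⟨hle, ⟨i, hi⟩, hj⟩, hidiv]
    have he2 : (j - 1) * (p + 1) + (p + 1) = j * (p + 1) := by
      cases j with
      | zero => omega
      | succ j' => simp [Nat.succ_sub_one, Nat.succ_mul]
    rcases Nat.eq_zero_or_pos i with hi0 | hi0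
    · -- i = 0 : n = j(p+1), hence j ≥ 2
      subst hi0
      have hnj : n = j * (p + 1) := by omega
      obtain ⟨b, hb⟩ : ∃ b, j = b + 2 := by
        refine ⟨j - 2, ?_⟩
        rcases Nat.lt_or_ge j 2 with h | h
        · interval_cases j <;> omega
        · omega
      have hT1 : Tterm p A B (n - p) j = 0 := Tterm_zero_of_lt (by omega)
      have hg2le : (j - 1) * (p + 1) ≤ n - p - 1 := by omega
      have hg2dvd : n - p - 1 - (j - 1) * (p + 1) = p * 0 := by omega
      have hg2idiv : (n - p - 1 - (j - 1) * (p + 1)) / p = 0 := by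
        rw [hg2dvd]; exact Nat.mul_div_cancel_left _ (by omega)
      have hT2 : Tterm p A B (n - p - 1) (j - 1) =
          (Nat.choose (0 + (j - 1 - 1)) 0 : S) * A ^ 0 * B ^ (j - 1) := by
        rw [Tterm, if_pos ⟨hg2le, ⟨0, hg2dvd⟩, by omega⟩, hg2idiv]
      rw [hTmain, hT1, hT2]
      subst hb
      simp only [show b + 2 - 1 = b + 1 from by omega, show b + 2 - 1 - 1 = b from by omega,
        Nat.zero_add, Nat.choose_zero_right, Nat.cast_one, one_mul, pow_zero, mul_zero, zero_add]
      ring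
    · -- i ≥ 1
      obtain ⟨a, ha⟩ : ∃ a, i = a + 1 := ⟨i - 1, by omega⟩
      have hep : p * (i - 1) + p = p * i := by
        subst ha; simp [Nat.mul_succ]
      have hg2le : j * (p + 1) ≤ n - p := by omega
      have hg2dvd : n - p - j * (p + 1) = p * (i - 1) := by omega
      have hg2idiv : (n - p - j * (p + 1)) / p = i - 1 := by
        rw [hg2dvd]; exact Nat.mul_div_cancel_left _ (by omega)
      have hT1 : Tterm p A B (n - p) j =
          (Nat.choose ((i - 1) + (j - 1)) (i - 1) : S) * A ^ (i - 1) * B ^ j := by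
        rw [Tterm, if_pos ⟨hg2le, ⟨i - 1, hg2dvd⟩, hj⟩, hg2idiv]
      rcases Nat.lt_or_ge j 2 with hj1 | hj2
      · -- j = 1
        have hj1' : j = 1 := by omega
        subst hj1'
        rw [hTmain, hT1, Tterm_zero_j0]
        subst ha
        simp only [Nat.sub_self, Nat.add_zero, Nat.add_sub_cancel, Nat.choose_self,
          Nat.cast_one, one_mul, mul_zero, add_zero, pow_one]
        ring
      · -- j ≥ 2
        obtain ⟨b, hb⟩ : ∃ b, j = b + 2 := ⟨j - 2, by omega⟩
        have hg3le : (j - 1) * (p + 1) ≤ n - p - 1 := by omega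
        have hg3dvd : n - p - 1 - (j - 1) * (p + 1) = p * i := by omega
        have hg3idiv : (n - p - 1 - (j - 1) * (p + 1)) / p = i := by
          rw [hg3dvd]; exact Nat.mul_div_cancel_left _ (by omega)
        have hT2 : Tterm p A B (n - p - 1) (j - 1) =
            (Nat.choose (i + (j - 1 - 1)) i : S) * A ^ i * B ^ (j - 1) := by
          rw [Tterm, if_pos ⟨hg3le, ⟨i, hg3dvd⟩, by omega⟩, hg3idiv]
        rw [hTmain, hT1, hT2]
        subst ha hb
        simp only [show b + 2 - 1 = b + 1 from by omega, show b + 2 - 1 - 1 = b from by omega,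
          Nat.add_sub_cancel]
        have hpas : ((a + 1) + (b + 1)).choose (a + 1) =
            (a + (b + 1)).choose a + ((a + 1) + b).choose (a + 1) := by
          rw [show (a + 1) + (b + 1) = (a + (b + 1)) + 1 by ring]
          rw [Nat.choose_succ_succ (a + (b + 1)) a]
          congr 2
          omega
        rw [hpas]
        push_cast
        ring
  · -- main guard fails
    rw [Tterm, if_neg (by tauto)]
    have hT1 : Tterm p A B (n - p) j = 0 := by
      rw [Tterm, if_neg]
      rintro ⟨h1, ⟨k, hk⟩, h3⟩
      have hkk : p * (k + 1) = p * k + p := by ring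
      apply hg1
      exact ⟨by omega, ⟨k + 1, by omega⟩⟩
    have hT2 : Tterm p A B (n - p - 1) (j - 1) = 0 := by
      rw [Tterm, if_neg]
      rintro ⟨h1, ⟨k, hk⟩, h3⟩
      have he2 : (j - 1) * (p + 1) + (p + 1) = j * (p + 1) := by
        cases j with
        | zero => omega
        | succ j' => simp [Nat.succ_sub_one, Nat.succ_mul]
      apply hg1
      exact ⟨by omega, ⟨k, by omega⟩⟩
    rw [hT1, hT2, mul_zero, mul_zero, add_zero]

end Alg2

section Main

variable {p : ℕ} [hp : Fact p.Prime]

private lemma main_mod_p {S : Type*} [CommRing S]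
    (hpS : (p : S) = 0) (h : Fin (p + 1) → S)
    (hsm : ∀ m, 1 ≤ m → m ≤ p → ∑ j, h j ^ m = 0)
    (n : ℕ) (hn : 1 ≤ n) (hδ : (Nat.digits p (n * (p - 1))).sum = p - 1) :
    ∑ j, h j ^ n = 0 := by
  have hp2 : 2 ≤ p := hp.out.two_le
  set E : ℕ → S := fun k => MvPolynomial.eval h (esymm (Fin (p + 1)) S k) with hE
  set P : ℕ → S := fun m => MvPolynomial.eval h (psum (Fin (p + 1)) S m) with hPdef
  have hP : ∀ m, P m = ∑ j, h j ^ m := fun m => psum_eval h m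
  have hPsmall : ∀ m, 1 ≤ m → m ≤ p → P m = 0 := fun m h1 h2 => (hP m).trans (hsm m h1 h2)
  have hNewt : ∀ k : ℕ, ((k : ℕ) : S) * E k =
      (-1) ^ (k + 1) * ∑ i ∈ Finset.range k, (-1) ^ i * E i * P (k - i) :=
    fun k => newton_eval h k
  have hE0 : E 0 = 1 := esymm_eval_zero h
  have hEbig : ∀ k, p + 2 ≤ k → E k = 0 := fun k hk => esymm_eval_big h k hk
  have hinv : ∀ k : ℕ, 1 ≤ k → k < p → ∃ u : S, u * (k : S) = 1 := by
    intro k h1 h2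
    have hnd : ¬ p ∣ k := fun hd => absurd (Nat.le_of_dvd (by omega) hd) (by omega)
    have hcop : Nat.gcd p k = 1 := (Nat.Prime.coprime_iff_not_dvd hp.out).mpr hnd
    have hbez := Nat.gcd_eq_gcd_ab p k
    rw [hcop] at hbez
    refine ⟨((Nat.gcdB p k : ℤ) : S), ?_⟩
    have hc : ((1 : ℤ) : S) = ((↑p * Nat.gcdA p k + ↑k * Nat.gcdB p k : ℤ) : S) := by
      rw [← hbez]; norm_num
    push_cast at hc
    rw [hpS] at hc
    linear_combination -hc
  have hEsmall : ∀ k, 1 ≤ k → k ≤ p - 1 → E k = 0 := by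
    intro k
    induction k using Nat.strong_induction_on with
    | _ k ih =>
      intro h1 h2
      have hsum0 : ∑ i ∈ Finset.range k, (-1 : S) ^ i * E i * P (k - i) = 0 := by
        apply Finset.sum_eq_zero
        intro i hi
        rcases Nat.eq_zero_or_pos i with h0 | h0
        · subst h0; rw [Nat.sub_zero, hPsmall k h1 (by omega)]; ring
        · have hik : i < k := Finset.mem_range.mp hi
          rw [ih i hik h0 (by omega)]; ring
      have hz := hNewt k
      rw [hsum0, mul_zero] at hz
      obtain ⟨u, hu⟩ := hinv k h1 (by omega)
      calc E k = (u * (k : S)) * E k := by rw [hu, one_mul]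
      _ = u * ((k : S) * E k) := by ring
      _ = 0 := by rw [hz, mul_zero]
  set A := (-1 : S) ^ (p + 1) * E p with hA
  set B := (-1 : S) ^ p * E (p + 1) with hB
  have hsign : ((-1 : S)) ^ (p + 1) = -((-1 : S)) ^ p := by rw [pow_succ]; ring
  have hsum_three : ∀ m, p + 2 ≤ m → ∑ i ∈ Finset.range m, (-1 : S) ^ i * E i * P (m - i)
      = P m + (-1) ^ p * E p * P (m - p) + (-1) ^ (p + 1) * E (p + 1) * P (m - p - 1) := by
    intro m hm
    have hsub : ({0, p, p + 1} : Finset ℕ) ⊆ Finset.range m := by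
      intro x hx
      simp only [Finset.mem_insert, Finset.mem_singleton] at hx
      rcases hx with h | h | h <;> exact Finset.mem_range.mpr (by omega)
    rw [← Finset.sum_subset hsub ?_]
    · rw [Finset.sum_insert (by simp only [Finset.mem_insert, Finset.mem_singleton]; omega),
        Finset.sum_insert (by simp only [Finset.mem_singleton]; omega), Finset.sum_singleton]
      rw [← Nat.sub_sub m p 1]
      simp only [pow_zero, one_mul, hE0, Nat.sub_zero]
      ring
    · intro x hx hnx
      have hx' : x < m := Finset.mem_range.mp hx
      simp only [Finset.mem_insert, Finset.mem_singleton] at hnx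
      push_neg at hnx
      rcases Nat.lt_or_ge x (p + 2) with hlt | hge
      · rw [hEsmall x (by omega) (by omega)]; ring
      · rw [hEbig x hge]; ring
  have hsp1 : P (p + 1) = B := by
    have hm := hNewt (p + 1)
    have hcast : ((p + 1 : ℕ) : S) = 1 := by push_cast [hpS]; ring
    rw [hcast, one_mul] at hm
    have hsum1 : ∑ i ∈ Finset.range (p + 1), (-1 : S) ^ i * E i * P (p + 1 - i) = P (p + 1) := by
      rw [Finset.sum_eq_single 0]
      · simp [hE0]
      · intro i hi hne
        have hilt : i < p + 1 := Finset.mem_range.mp hi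
        rcases Nat.lt_or_ge i p with hip | hip
        · rw [hEsmall i (by omega) (by omega)]; ring
        · have hieq : i = p := by omega
          rw [hieq, show p + 1 - p = 1 from by omega, hPsmall 1 le_rfl (by omega)]; ring
      · intro habs; exact absurd (Finset.mem_range.mpr (by omega)) habs
    rw [hsum1] at hm
    rw [hB, hm, ← mul_assoc]
    have hone : ((-1 : S)) ^ p * ((-1 : S)) ^ (p + 1 + 1) = 1 := by
      rw [← pow_add, show p + (p + 1 + 1) = 2 * (p + 1) from by ring, pow_mul]
      norm_num
    rw [hone, one_mul]
  have hrec : ∀ m, p + 2 ≤ m → P m = A * P (m - p) + B * P (m - p - 1) := by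
    intro m hm
    have h0 := hNewt m
    rw [hEbig m hm, mul_zero, hsum_three m hm] at h0
    have hone : ((-1 : S)) ^ (m + 1) * ((-1 : S)) ^ (m + 1) = 1 := by
      rw [← pow_add, show (m + 1) + (m + 1) = 2 * (m + 1) from by ring, pow_mul]
      norm_num
    have h0' : P m + (-1 : S) ^ p * E p * P (m - p) + (-1) ^ (p + 1) * E (p + 1) * P (m - p - 1)
        = 0 := by
      have h1 := congrArg (fun z => ((-1 : S)) ^ (m + 1) * z) h0
      simp only [mul_zero] at h1
      rw [← mul_assoc, hone, one_mul] at h1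
      linear_combination -h1
    rw [hA, hB]
    rw [hsign] at h0' ⊢
    linear_combination h0'
  have hform : ∀ m, 1 ≤ m → P m = fsum p A B m := by
    intro m
    induction m using Nat.strong_induction_on with
    | _ m ih =>
      intro hm1
      rcases Nat.lt_or_ge m (p + 1) with hc1 | hge1
      · rw [hPsmall m hm1 (by omega), fsum]
        symm
        apply Finset.sum_eq_zero
        intro j hj
        rcases Nat.eq_zero_or_pos j with h0 | h0
        · subst h0; exact Tterm_zero_j0
        · refine Tterm_zero_of_lt ?_
          have h1j : 1 * (p + 1) ≤ j * (p + 1) := Nat.mul_le_mul_right _ h0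
          omega
      · rcases Nat.lt_or_ge m (p + 2) with hc2 | hge2
        · have hmeq : m = p + 1 := by omega
          subst hmeq
          rw [hsp1, fsum]
          symm
          rw [Finset.sum_eq_single 1]
          · rw [Tterm, if_pos ⟨by omega, ⟨0, by omega⟩, le_rfl⟩]
            rw [show p + 1 - 1 * (p + 1) = p * 0 from by omega]
            rw [Nat.mul_div_cancel_left _ (by omega : 0 < p)]
            norm_num
          · intro j hj hne
            rcases Nat.eq_zero_or_pos j with h0 | h0
            · subst h0; exact Tterm_zero_j0
            · have hj2 : 2 ≤ j := by omega
              refine Tterm_zero_of_lt ?_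
              have h2j : 2 * (p + 1) ≤ j * (p + 1) := Nat.mul_le_mul_right _ hj2
              omega
          · intro habs; exact absurd (Finset.mem_range.mpr (by omega)) habs
        · have hm_p : 1 ≤ m - p := by omega
          have hm_p1 : 1 ≤ m - p - 1 := by omega
          rw [hrec m hge2, ih (m - p) (by omega) hm_p, ih (m - p - 1) (by omega) hm_p1]
          rw [fsum_ext (p := p) (A := A) (B := B) (n := m - p) (m + 1) (by omega),
            fsum_ext (p := p) (A := A) (B := B) (n := m - p - 1) m (by omega), fsum]
          rw [Finset.mul_sum, Finset.mul_sum]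
          have hshift : ∑ j ∈ Finset.range (m + 1), B * Tterm p A B (m - p - 1) (j - 1)
              = ∑ j ∈ Finset.range m, B * Tterm p A B (m - p - 1) j := by
            rw [Finset.sum_range_succ' (fun j => B * Tterm p A B (m - p - 1) (j - 1)) m]
            simp only [Nat.add_sub_cancel, Nat.zero_sub]
            rw [Tterm_zero_j0, mul_zero, add_zero]
          rw [← hshift, ← Finset.sum_add_distrib]
          apply Finset.sum_congr rfl
          intro j hj
          exact (Tterm_step hp2 A B m j hge2).symm
  have hzero : fsum p A B n = 0 := by
    rw [fsum]
    apply Finset.sum_eq_zero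
    intro j hj
    rw [Tterm]
    split_ifs with hg
    · obtain ⟨hle, hdvd, hj1⟩ := hg
      obtain ⟨i, hi⟩ := hdvd
      have hidiv : (n - j * (p + 1)) / p = i := by
        rw [hi]; exact Nat.mul_div_cancel_left i (by omega)
      have hcomm : i * p = p * i := mul_comm i p
      have hin : i * p + j * (p + 1) = n := by omega
      have hdc := arith_key n i j hn hj1 hin hδ
      rw [hidiv, show i + (j - 1) = i + j - 1 from by omega]
      obtain ⟨t, ht⟩ := hdc
      rw [ht]
      push_cast
      rw [hpS]
      ring
    · rfl
  rw [← hP n, hform n hn, hzero]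

end Main

/-- Let `g_0, …, g_p` be elements of a commutative `ℤ_p`-algebra `R` which is an
integral domain (with `p ≠ 0` in `R`, i.e. `R` is `p`-torsion-free), and let
`υ_n = ∑_j g_j^n`. If `υ_n ∈ pR` for `n = 1, …, p`, then `υ_n ∈ pR` for every `n ≥ 1`
with base-`p` digit sum of `n(p-1)` equal to `p-1`. -/
theorem power_sums_divisibility (p : ℕ) [Fact p.Prime]
    (R : Type*) [CommRing R] [IsDomain R] [Algebra ℤ_[p] R]
    (hptf : (p : R) ≠ 0)
    (g : Fin (p + 1) → R)
    (hsmall : ∀ n, 1 ≤ n → n ≤ p → ∃ c : R, ∑ j, g j ^ n = (p : R) * c)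
    (n : ℕ) (hn : 1 ≤ n) (hδ : (Nat.digits p (n * (p - 1))).sum = p - 1) :
    ∃ c : R, ∑ j, g j ^ n = (p : R) * c := by
  set I : Ideal R := Ideal.span {(p : R)} with hI
  set π : R →+* R ⧸ I := Ideal.Quotient.mk I with hπ
  have hpS : ((p : ℕ) : R ⧸ I) = 0 := by
    rw [← map_natCast π p, hπ, Ideal.Quotient.eq_zero_iff_mem]
    exact Ideal.subset_span rfl
  have hsm : ∀ m, 1 ≤ m → m ≤ p → ∑ j, (π (g j)) ^ m = 0 := by
    intro m h1 h2
    obtain ⟨c, hc⟩ := hsmall m h1 h2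
    have : ∑ j, (π (g j)) ^ m = π (∑ j, g j ^ m) := by
      rw [map_sum]
      exact Finset.sum_congr rfl fun j _ => (map_pow π (g j) m).symm
    rw [this, hc, map_mul, map_natCast, hpS, zero_mul]
  have hmain := main_mod_p hpS (fun t => π (g t)) hsm n hn hδ
  have hmem : ∑ j, g j ^ n ∈ I := by
    rw [← Ideal.Quotient.eq_zero_iff_mem]
    rw [← hmain, map_sum]
    exact Finset.sum_congr rfl fun j _ => (map_pow π (g j) n)
  rw [hI, Ideal.mem_span_singleton'] at hmem
  obtain ⟨a, ha⟩ := hmem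
  exact ⟨a, by rw [← ha]; ring⟩
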